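/- Let (Ω,𝓕,ℙ) be a probability space, 𝓖 ⊆ 𝓕 a sub-σ-algebra such that (Ω,𝓖,ℙ) is atomless, and ≿ a total preorder on a 𝓖-law-invariant set 𝒳 of bounded random variables that is monotone (Y ≤ X a.s. implies X ≿ Y). Then ≿ is 𝓖-FSD monotone (X ≿ Y whenever X,Y are 𝓖-measurable and Y dominates X in first-order stochastic dominance) if and only if ≿ is 𝓖-law invariant (X ∼ Y whenever X,Y are 𝓖-measurable and identically distributed under ℙ). -/

import Mathlib

open MeasureTheory
open scoped ENNReal

section AuxFSD

variable {Ω : Type*} {m mΩ : MeasurableSpace Ω}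

/-- halving: a subset of at most half the measure, still positive. -/
lemma aux_half (hm : m ≤ mΩ) (ℙ : Measure Ω) [IsProbabilityMeasure ℙ]
    (hatomless : ∀ A : Set Ω, MeasurableSet[m] A → 0 < ℙ A →
      ∃ B : Set Ω, MeasurableSet[m] B ∧ B ⊆ A ∧ 0 < ℙ B ∧ ℙ B < ℙ A)
    (A : Set Ω) (hA : MeasurableSet[m] A) (hApos : 0 < ℙ A) :
    ∃ B : Set Ω, MeasurableSet[m] B ∧ B ⊆ A ∧ 0 < ℙ B ∧ ℙ B ≤ ℙ A / 2 := by
  obtain ⟨B, hB, hBA, hBpos, hBlt⟩ := hatomless A hA hApos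
  have hfin : ℙ A ≠ ⊤ := (measure_lt_top ℙ A).ne
  by_cases h : ℙ B ≤ ℙ A / 2
  · exact ⟨B, hB, hBA, hBpos, h⟩
  · refine ⟨A \ B, hA.diff hB, Set.diff_subset, ?_, ?_⟩
    · have := measure_diff hBA (hm _ hB).nullMeasurableSet (measure_lt_top ℙ B).ne
      rw [this]
      exact tsub_pos_of_lt hBlt
    · have := measure_diff hBA (hm _ hB).nullMeasurableSet (measure_lt_top ℙ B).ne
      rw [this]
      push_neg at h
      calc ℙ A - ℙ B ≤ ℙ A - ℙ A / 2 := tsub_le_tsub_left h.le _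
        _ = ℙ A / 2 := ENNReal.sub_half hfin

/-- small positive subsets -/
lemma aux_small (hm : m ≤ mΩ) (ℙ : Measure Ω) [IsProbabilityMeasure ℙ]
    (hatomless : ∀ A : Set Ω, MeasurableSet[m] A → 0 < ℙ A →
      ∃ B : Set Ω, MeasurableSet[m] B ∧ B ⊆ A ∧ 0 < ℙ B ∧ ℙ B < ℙ A)
    (A : Set Ω) (hA : MeasurableSet[m] A) (hApos : 0 < ℙ A) (ε : ℝ≥0∞) (hε : 0 < ε) :
    ∃ B : Set Ω, MeasurableSet[m] B ∧ B ⊆ A ∧ 0 < ℙ B ∧ ℙ B ≤ ε := by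
  have key : ∀ n : ℕ, ∃ B : Set Ω, MeasurableSet[m] B ∧ B ⊆ A ∧ 0 < ℙ B ∧ ℙ B ≤ ℙ A / 2 ^ n := by
    intro n
    induction n with
    | zero => exact ⟨A, hA, subset_rfl, hApos, by simp⟩
    | succ n ih =>
      obtain ⟨B, hB, hBA, hBpos, hBle⟩ := ih
      obtain ⟨C, hC, hCB, hCpos, hCle⟩ := aux_half hm ℙ hatomless B hB hBpos
      refine ⟨C, hC, hCB.trans hBA, hCpos, hCle.trans ?_⟩
      rw [pow_succ]
      calc ℙ B / 2 ≤ ℙ A / 2 ^ n / 2 := by gcongr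
        _ = ℙ A / (2 ^ n * 2) := by simp [div_eq_mul_inv, ENNReal.mul_inv, mul_assoc]
  obtain ⟨n, hn⟩ := ENNReal.exists_inv_two_pow_lt hε.ne'
  obtain ⟨B, hB, hBA, hBpos, hBle⟩ := key n
  refine ⟨B, hB, hBA, hBpos, hBle.trans (le_trans ?_ hn.le)⟩
  have h1 : ℙ A ≤ 1 := prob_le_one
  calc ℙ A / 2 ^ n ≤ 1 / 2 ^ n := by gcongr
    _ = 2⁻¹ ^ n := by rw [one_div, ENNReal.inv_pow]

/-- simple dependent recursion existence lemma -/
lemma exists_seq_rec {α : Type*} (P : α → Prop) (Q : α → α → Prop) (a₀ : α) (h₀ : P a₀)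
    (hstep : ∀ a, P a → ∃ b, P b ∧ Q a b) :
    ∃ f : ℕ → α, f 0 = a₀ ∧ (∀ n, P (f n)) ∧ ∀ n, Q (f n) (f (n + 1)) := by
  let F : ℕ → {a : α // P a} := fun n =>
    Nat.rec ⟨a₀, h₀⟩ (fun _ p => ⟨(hstep p.1 p.2).choose, (hstep p.1 p.2).choose_spec.1⟩) n
  exact ⟨fun n => (F n).1, rfl, fun n => (F n).2,
    fun n => (hstep (F n).1 (F n).2).choose_spec.2⟩

/-- Sierpiński: an atomless measure attains every intermediate value. -/
lemma aux_sierpinski (hm : m ≤ mΩ) (ℙ : Measure Ω) [IsProbabilityMeasure ℙ]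
    (hatomless : ∀ A : Set Ω, MeasurableSet[m] A → 0 < ℙ A →
      ∃ B : Set Ω, MeasurableSet[m] B ∧ B ⊆ A ∧ 0 < ℙ B ∧ ℙ B < ℙ A)
    (A : Set Ω) (hA : MeasurableSet[m] A) (t : ℝ≥0∞) (ht : t ≤ ℙ A) :
    ∃ B : Set Ω, MeasurableSet[m] B ∧ B ⊆ A ∧ ℙ B = t := by
  classical
  set Good : Set Ω → Prop := fun B => MeasurableSet[m] B ∧ B ⊆ A ∧ ℙ B ≤ t with hGood
  set Q : Set Ω → Set Ω → Prop := fun B B' => ∃ C : Set Ω, MeasurableSet[m] C ∧ C ⊆ A \ B ∧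
      B' = B ∪ C ∧ ℙ B + ℙ C ≤ t ∧
      (∀ D : Set Ω, MeasurableSet[m] D → D ⊆ A \ B → ℙ B + ℙ D ≤ t → ℙ D ≤ 2 * ℙ C) with hQ
  have hstep : ∀ B, Good B → ∃ B', Good B' ∧ Q B B' := by
    rintro B ⟨hBm, hBA, hBt⟩
    set S : Set ℝ≥0∞ := {r | ∃ D : Set Ω, MeasurableSet[m] D ∧ D ⊆ A \ B ∧ ℙ B + ℙ D ≤ t ∧ ℙ D = r}
      with hS
    have h0S : (0 : ℝ≥0∞) ∈ S := ⟨∅, @MeasurableSet.empty _ m, Set.empty_subset _, by simpa, by simp⟩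
    set s := sSup S with hs
    have hsle : s ≤ 1 := by
      apply sSup_le
      rintro r ⟨D, -, -, -, rfl⟩
      exact prob_le_one
    have key : ∃ C : Set Ω, MeasurableSet[m] C ∧ C ⊆ A \ B ∧ ℙ B + ℙ C ≤ t ∧ s ≤ 2 * ℙ C := by
      rcases eq_or_lt_of_le (bot_le : (0:ℝ≥0∞) ≤ s) with h0 | hpos
      · exact ⟨∅, @MeasurableSet.empty _ m, Set.empty_subset _, by simpa, by simp [← h0]⟩
      · have hhalf : s / 2 < s := ENNReal.half_lt_self hpos.ne' (lt_of_le_of_lt hsle (by norm_num)).ne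
        obtain ⟨r, hrS, hrgt⟩ := lt_sSup_iff.mp hhalf
        obtain ⟨C, hCm, hCsub, hCt, hCr⟩ := hrS
        refine ⟨C, hCm, hCsub, hCt, ?_⟩
        rw [hCr]
        have := (ENNReal.div_lt_iff (Or.inl (two_ne_zero)) (Or.inl (ENNReal.ofNat_ne_top))).mp hrgt
        calc s ≤ r * 2 := this.le
          _ = 2 * r := mul_comm _ _
    obtain ⟨C, hCm, hCsub, hCt, hCs⟩ := key
    refine ⟨B ∪ C, ⟨hBm.union hCm, Set.union_subset hBA (hCsub.trans Set.diff_subset), ?_⟩,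
      C, hCm, hCsub, rfl, hCt, ?_⟩
    · calc ℙ (B ∪ C) ≤ ℙ B + ℙ C := measure_union_le _ _
        _ ≤ t := hCt
    · intro D hDm hDsub hDt
      calc ℙ D ≤ s := le_sSup ⟨D, hDm, hDsub, hDt, rfl⟩
        _ ≤ 2 * ℙ C := hCs
  obtain ⟨f, hf0, hfP, hfQ⟩ := exists_seq_rec Good Q ∅
    ⟨@MeasurableSet.empty _ m, Set.empty_subset _, by simpa⟩ hstep
  choose C hCm hCsub hCeq hCt hCmax using hfQ
  -- disjointness of B n and C n
  have hBn_meas : ∀ n, MeasurableSet[m] (f n) := fun n => (hfP n).1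
  have hBn_sub : ∀ n, f n ⊆ A := fun n => (hfP n).2.1
  have hmono : ∀ n, f n ⊆ f (n + 1) := fun n => (hCeq n) ▸ Set.subset_union_left
  have hmono' : Monotone f := monotone_nat_of_le_succ hmono
  -- B n = union of C i, i < n
  have hBsum : ∀ n, ℙ (f n) = ∑ i ∈ Finset.range n, ℙ (C i) := by
    intro n
    induction n with
    | zero => simp [hf0]
    | succ n ih =>
      rw [hCeq n, measure_union ?_ (hm _ (hCm n)), ih, Finset.sum_range_succ]
      exact Set.disjoint_of_subset le_rfl (hCsub n) (Set.disjoint_sdiff_right)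
  set B := ⋃ n, C n with hB
  have hCdisj : Pairwise (Function.onFun Disjoint C) := by
    intro i j hij
    wlog h : i < j generalizing i j
    · exact (this hij.symm (by omega)).symm
    · have h1 : C i ⊆ f (i + 1) := (hCeq i) ▸ Set.subset_union_right
      have h2 : C j ⊆ A \ f j := hCsub j
      have h3 : f (i + 1) ⊆ f j := hmono' h
      exact Set.disjoint_of_subset (h1.trans h3) h2 Set.disjoint_sdiff_right
  have hBm : MeasurableSet[m] B := MeasurableSet.iUnion hCm
  have hBA : B ⊆ A := Set.iUnion_subset fun n => (hCsub n).trans Set.diff_subset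
  have hBval : ℙ B = ∑' n, ℙ (C n) := measure_iUnion hCdisj fun n => hm _ (hCm n)
  have hBle : ℙ B ≤ t := by
    rw [hBval, ENNReal.tsum_eq_iSup_sum]
    apply iSup_le
    intro sfin
    obtain ⟨n, hn⟩ := sfin.exists_nat_subset_range
    calc ∑ i ∈ sfin, ℙ (C i) ≤ ∑ i ∈ Finset.range n, ℙ (C i) :=
          Finset.sum_le_sum_of_subset hn
      _ = ℙ (f n) := (hBsum n).symm
      _ ≤ t := (hfP n).2.2
  refine ⟨B, hBm, hBA, ?_⟩
  by_contra hne
  have hBlt : ℙ B < t := lt_of_le_of_ne hBle hne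
  -- positive measure remainder
  have hdiff : ℙ (A \ B) = ℙ A - ℙ B := measure_diff hBA (hm _ hBm).nullMeasurableSet
    (measure_lt_top ℙ B).ne
  have hpos : 0 < ℙ (A \ B) := by
    rw [hdiff]
    exact tsub_pos_of_lt (lt_of_lt_of_le hBlt ht)
  obtain ⟨D, hDm, hDsub, hDpos, hDle⟩ := aux_small hm ℙ hatomless (A \ B) (hA.diff hBm) hpos
    (t - ℙ B) (tsub_pos_of_lt hBlt)
  have hfnB : ∀ n, f n ⊆ B := by
    intro n
    induction n with
    | zero => rw [hf0]; exact Set.empty_subset _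
    | succ n ih =>
      rw [hCeq n]
      exact Set.union_subset ih (Set.subset_iUnion C n)
  have hDn : ∀ n, ℙ D ≤ 2 * ℙ (C n) := by
    intro n
    apply hCmax n D hDm
    · exact hDsub.trans (Set.diff_subset_diff_right (hfnB n))
    · calc ℙ (f n) + ℙ D ≤ ℙ B + (t - ℙ B) := add_le_add (measure_mono (hfnB n)) hDle
        _ = t := add_tsub_cancel_of_le hBlt.le
  -- but ℙ (C n) → 0
  have htsum : ∑' n, ℙ (C n) ≠ ⊤ := by
    rw [← hBval]; exact (measure_lt_top ℙ B).ne
  have htend : Filter.Tendsto (fun n => ℙ (C n)) Filter.atTop (nhds 0) :=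
    ENNReal.tendsto_atTop_zero_of_tsum_ne_top htsum
  have hhalfpos : 0 < ℙ D / 2 := ENNReal.div_pos hDpos.ne' ENNReal.ofNat_ne_top
  obtain ⟨n, hn⟩ := (Filter.eventually_atTop.mp
    (htend.eventually_lt_const hhalfpos)) -- maybe wrong lemma name
  have := hDn n
  have hlt : 2 * ℙ (C n) < ℙ D := by
    have h2 : ℙ (C n) < ℙ D / 2 := hn n le_rfl
    calc 2 * ℙ (C n) < 2 * (ℙ D / 2) := by
          apply ENNReal.mul_lt_mul_right (by norm_num) ENNReal.ofNat_ne_top h2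
      _ = ℙ D := ENNReal.mul_div_cancel (by norm_num) ENNReal.ofNat_ne_top
  exact absurd this hlt.not_ge

lemma exists_seq_rec' {α : Type*} (P : ℕ → α → Prop) (Q : ℕ → α → α → Prop) (a₀ : α)
    (h₀ : P 0 a₀) (hstep : ∀ n a, P n a → ∃ b, P (n + 1) b ∧ Q n a b) :
    ∃ f : ℕ → α, f 0 = a₀ ∧ (∀ n, P n (f n)) ∧ ∀ n, Q n (f n) (f (n + 1)) := by
  let F : ∀ n : ℕ, {a : α // P n a} := fun n =>
    Nat.rec ⟨a₀, h₀⟩ (fun k p => ⟨(hstep k p.1 p.2).choose, (hstep k p.1 p.2).choose_spec.1⟩) n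
  exact ⟨fun n => (F n).1, rfl, fun n => (F n).2,
    fun n => (hstep n (F n).1 (F n).2).choose_spec.2⟩

/-- dyadic partitions -/
lemma aux_partition (hm : m ≤ mΩ) (ℙ : Measure Ω) [IsProbabilityMeasure ℙ]
    (hatomless : ∀ A : Set Ω, MeasurableSet[m] A → 0 < ℙ A →
      ∃ B : Set Ω, MeasurableSet[m] B ∧ B ⊆ A ∧ 0 < ℙ B ∧ ℙ B < ℙ A) :
    ∃ f : ℕ → ℕ → Set Ω,
      (∀ n k, MeasurableSet[m] (f n k)) ∧
      (∀ n k, k < 2 ^ n → ℙ (f n k) = (2 : ℝ≥0∞)⁻¹ ^ n) ∧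
      (∀ n k, 2 ^ n ≤ k → f n k = ∅) ∧
      (∀ n, Pairwise (Function.onFun Disjoint (f n))) ∧
      (∀ n, (⋃ k, f n k) = Set.univ) ∧
      (∀ n k, f (n + 1) (2 * k) ∪ f (n + 1) (2 * k + 1) = f n k) := by
  classical
  set P : ℕ → (ℕ → Set Ω) → Prop := fun n g =>
    (∀ k, MeasurableSet[m] (g k)) ∧ (∀ k, k < 2 ^ n → ℙ (g k) = (2 : ℝ≥0∞)⁻¹ ^ n) ∧
    (∀ k, 2 ^ n ≤ k → g k = ∅) ∧ Pairwise (Function.onFun Disjoint g) ∧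
    (⋃ k, g k) = Set.univ with hP
  set Q : ℕ → (ℕ → Set Ω) → (ℕ → Set Ω) → Prop := fun _ g g' =>
    ∀ k, g' (2 * k) ∪ g' (2 * k + 1) = g k with hQdef
  have h₀ : P 0 (fun k => if k = 0 then Set.univ else ∅) := by
    refine ⟨fun k => ?_, fun k hk => ?_, fun k hk => ?_, fun i j hij => ?_, ?_⟩
    · by_cases h : k = 0 <;> simp [h, MeasurableSet.univ, @MeasurableSet.empty _ m]
    · interval_cases k
      simp
    · have : k ≠ 0 := by omega
      simp [this]
    · rcases eq_or_ne i 0 with rfl | hi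
      · have : j ≠ 0 := hij.symm
        simp [Function.onFun, this]
      · simp [Function.onFun, hi]
    · apply Set.eq_univ_of_subset (Set.subset_iUnion (fun k => if k = 0 then Set.univ else ∅) 0)
      simp
  have hstep : ∀ n g, P n g → ∃ g', P (n + 1) g' ∧ Q n g g' := by
    intro n g hg
    obtain ⟨hgm, hgval, hgempty, hgdisj, hguniv⟩ := hg
    -- choose halves
    have hhalf : ∀ j : ℕ, ∃ H : Set Ω, MeasurableSet[m] H ∧ H ⊆ g j ∧ ℙ H = ℙ (g j) / 2 :=
      fun j => aux_sierpinski hm ℙ hatomless (g j) (hgm j) (ℙ (g j) / 2) (ENNReal.half_le_self)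
    choose H hHm hHsub hHval using hhalf
    set g' : ℕ → Set Ω := fun k => if k % 2 = 0 then H (k / 2) else g (k / 2) \ H (k / 2) with hg'
    have hg'sub : ∀ k, g' (k) ⊆ g (k / 2) := by
      intro k
      by_cases h : k % 2 = 0 <;> simp only [hg', h, if_true, if_false, if_neg, if_pos] <;>
        first
          | exact hHsub _
          | simp [h, Set.diff_subset, hHsub _]
    have hkey : ∀ j, g' (2 * j) = H j ∧ g' (2 * j + 1) = g j \ H j := by
      intro j
      have h1 : (2 * j) % 2 = 0 := by omega
      have h2 : (2 * j) / 2 = j := by omega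
      have h3 : (2 * j + 1) % 2 = 1 := by omega
      have h4 : (2 * j + 1) / 2 = j := by omega
      constructor <;> simp [hg', h1, h2, h3, h4]
    refine ⟨g', ⟨fun k => ?_, fun k hk => ?_, fun k hk => ?_, fun i j hij => ?_, ?_⟩, fun k => ?_⟩
    · by_cases h : k % 2 = 0 <;> simp only [hg', h, if_true, if_pos, if_neg] <;>
        first
          | exact hHm _
          | simp [h, (hgm _).diff (hHm _)]
    · -- measure value
      have hj : k / 2 < 2 ^ n := by omega
      have hfin : ℙ (g (k / 2)) ≠ ⊤ := (measure_lt_top ℙ _).ne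
      by_cases h : k % 2 = 0
      · have : g' k = H (k / 2) := by simp [hg', h]
        rw [this, hHval, hgval _ hj, pow_succ]
        rw [ENNReal.div_eq_inv_mul, mul_comm]
      · have : g' k = g (k / 2) \ H (k / 2) := by simp [hg', h]
        rw [this, measure_diff (hHsub _) (hm _ (hHm _)).nullMeasurableSet
          (measure_lt_top ℙ _).ne, hHval, hgval _ hj,
          ENNReal.sub_half (ENNReal.pow_ne_top (by simp)), pow_succ]
        rw [ENNReal.div_eq_inv_mul, mul_comm]
    · -- empty for large k
      have hj : 2 ^ n ≤ k / 2 := by omega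
      have hempty : g (k / 2) = ∅ := hgempty _ hj
      have : g' k ⊆ (∅ : Set Ω) := hempty ▸ hg'sub k
      exact Set.subset_empty_iff.mp this
    · -- pairwise disjoint
      rcases eq_or_ne (i / 2) (j / 2) with heq | hne
      · -- same parent: one is even one is odd
        have hpar : i % 2 ≠ j % 2 := by omega
        have : Disjoint (H (i / 2)) (g (i / 2) \ H (i / 2)) := Set.disjoint_sdiff_right
        rcases Nat.even_or_odd i with hi | hi
        · have hi2 : i % 2 = 0 := Nat.even_iff.mp hi
          have hj2 : ¬ j % 2 = 0 := by omega
          simp only [Function.onFun, hg', hi2, hj2, if_true, if_false, if_pos, if_neg, heq]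
          simpa [heq] using this
        · have hi2 : ¬ i % 2 = 0 := by
            have := Nat.odd_iff.mp hi; omega
          have hj2 : j % 2 = 0 := by
            have := Nat.odd_iff.mp hi; omega
          simp only [Function.onFun, hg', hi2, hj2, if_true, if_false, if_pos, if_neg, heq]
          simpa [heq] using this.symm
      · exact Set.disjoint_of_subset (hg'sub i) (hg'sub j) (hgdisj hne)
    · -- union univ
      rw [← hguniv]
      apply Set.Subset.antisymm
      · exact Set.iUnion_subset fun k => (hg'sub k).trans (Set.subset_iUnion _ _)
      · apply Set.iUnion_subset
        intro j
        have : g j = g' (2 * j) ∪ g' (2 * j + 1) := by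
          rw [(hkey j).1, (hkey j).2, Set.union_diff_cancel (hHsub j)]
        rw [this]
        exact Set.union_subset (Set.subset_iUnion _ _) (Set.subset_iUnion _ _)
    · -- Q
      rw [(hkey k).1, (hkey k).2, Set.union_diff_cancel (hHsub k)]
  obtain ⟨f, _, hfP, hfQ⟩ := exists_seq_rec' P Q _ h₀ hstep
  exact ⟨f, fun n => (hfP n).1, fun n => (hfP n).2.1, fun n => (hfP n).2.2.1,
    fun n => (hfP n).2.2.2.1, fun n => (hfP n).2.2.2.2, fun n => hfQ n⟩

/-- a uniform random variable -/
lemma aux_uniform (hm : m ≤ mΩ) (ℙ : Measure Ω) [IsProbabilityMeasure ℙ]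
    (hatomless : ∀ A : Set Ω, MeasurableSet[m] A → 0 < ℙ A →
      ∃ B : Set Ω, MeasurableSet[m] B ∧ B ⊆ A ∧ 0 < ℙ B ∧ ℙ B < ℙ A) :
    ∃ U : Ω → ℝ, Measurable[m] U ∧ (∀ ω, U ω ∈ Set.Icc (0 : ℝ) 1) ∧
      ∀ t ∈ Set.Icc (0 : ℝ) 1, ℙ {ω | U ω ≤ t} = ENNReal.ofReal t := by
  classical
  obtain ⟨f, hfm, hfval, hfempty, hfdisj, hfuniv, hfsplit⟩ := aux_partition hm ℙ hatomless
  set K : ℕ → Ω → ℕ := fun n ω => sInf {k | ω ∈ f n k} with hK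
  have hKmem : ∀ n ω, ω ∈ f n (K n ω) := by
    intro n ω
    have h1 : ω ∈ ⋃ k, f n k := (hfuniv n).symm ▸ Set.mem_univ ω
    have h2 : {k | ω ∈ f n k}.Nonempty := Set.mem_iUnion.mp h1
    exact Nat.sInf_mem h2
  have hKuniq : ∀ n ω k, ω ∈ f n k → K n ω = k := by
    intro n ω k hk
    by_contra hne
    exact Set.disjoint_left.mp (hfdisj n hne) (hKmem n ω) hk
  have hKlt : ∀ n ω, K n ω < 2 ^ n := by
    intro n ω
    by_contra h
    have := hfempty n _ (not_lt.mp h)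
    exact absurd (this ▸ hKmem n ω) (Set.notMem_empty ω)
  set V : ℕ → Ω → ℝ := fun n ω => (K n ω : ℝ) / 2 ^ n with hV
  have hVnonneg : ∀ n ω, 0 ≤ V n ω := fun n ω => by positivity
  have hVle1 : ∀ n ω, V n ω ≤ 1 := by
    intro n ω
    rw [hV, div_le_one (by positivity)]
    exact_mod_cast (hKlt n ω).le.trans (by exact_mod_cast Nat.le_refl _)
  have hKstep : ∀ n ω, K (n + 1) ω = 2 * K n ω ∨ K (n + 1) ω = 2 * K n ω + 1 := by
    intro n ω
    have h1 : ω ∈ f (n + 1) (2 * K n ω) ∪ f (n + 1) (2 * K n ω + 1) :=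
      (hfsplit n (K n ω)).symm ▸ hKmem n ω
    rcases h1 with h | h
    · exact Or.inl (hKuniq _ _ _ h)
    · exact Or.inr (hKuniq _ _ _ h)
  have hVstep : ∀ n ω, V n ω ≤ V (n + 1) ω ∧ V (n + 1) ω ≤ V n ω + (2 : ℝ)⁻¹ ^ (n + 1) := by
    intro n ω
    have hpow : (0:ℝ) < 2 ^ n := by positivity
    rcases hKstep n ω with h | h
    · have he : V (n + 1) ω = V n ω := by
        rw [hV]; simp only [h]; push_cast; field_simp; ring
      exact ⟨he.ge, he.le.trans (le_add_of_nonneg_right (by positivity))⟩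
    · have he : V (n + 1) ω = V n ω + (2 : ℝ)⁻¹ ^ (n + 1) := by
        rw [hV]; simp only [h]; push_cast; rw [inv_pow]; field_simp; ring
      exact ⟨he.symm ▸ le_add_of_nonneg_right (by positivity), he.le⟩
  have hVmono : ∀ ω, Monotone fun n => V n ω := fun ω =>
    monotone_nat_of_le_succ fun n => (hVstep n ω).1
  set U : Ω → ℝ := fun ω => ⨆ n, V n ω with hU
  have hbdd : ∀ ω, BddAbove (Set.range fun n => V n ω) := fun ω =>
    ⟨1, by rintro x ⟨n, rfl⟩; exact hVle1 n ω⟩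
  have hUlb : ∀ n ω, V n ω ≤ U ω := fun n ω => le_ciSup (hbdd ω) n
  have hU01 : ∀ ω, U ω ∈ Set.Icc (0 : ℝ) 1 := fun ω =>
    ⟨(hVnonneg 0 ω).trans (hUlb 0 ω), ciSup_le fun n => hVle1 n ω⟩
  have hUub : ∀ n ω, U ω ≤ V n ω + (2 : ℝ)⁻¹ ^ n := by
    intro n ω
    apply ciSup_le
    intro j
    rcases le_or_gt j n with hjn | hjn
    · exact (hVmono ω hjn).trans (le_add_of_nonneg_right (by positivity))
    · have key : ∀ d, V (n + d) ω ≤ V n ω + (2 : ℝ)⁻¹ ^ n - (2 : ℝ)⁻¹ ^ (n + d) := by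
        intro d
        induction d with
        | zero => simp
        | succ d ih =>
          have h2 := (hVstep (n + d) ω).2
          have h3 : (2 : ℝ)⁻¹ ^ (n + d) = 2 * (2 : ℝ)⁻¹ ^ (n + d + 1) := by
            rw [pow_succ]; ring
          have : V (n + d + 1) ω ≤ V n ω + (2:ℝ)⁻¹ ^ n - (2:ℝ)⁻¹ ^ (n + d) + (2:ℝ)⁻¹ ^ (n+d+1) := by
            linarith
          calc V (n + (d + 1)) ω = V (n + d + 1) ω := by ring_nf
            _ ≤ V n ω + (2:ℝ)⁻¹ ^ n - (2:ℝ)⁻¹ ^ (n + (d + 1)) := by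
                rw [show n + (d + 1) = n + d + 1 from rfl]; linarith
      have hkey := key (j - n)
      rw [Nat.add_sub_cancel' hjn.le] at hkey
      have : (0:ℝ) < (2:ℝ)⁻¹ ^ j := by positivity
      linarith
  have hKmeas : ∀ n, Measurable[m] (K n) := by
    intro n
    apply @measurable_to_countable' ℕ Ω _ _ m (K n)
    intro k
    have : K n ⁻¹' {k} = f n k := by
      ext ω
      constructor
      · intro h
        have : K n ω = k := h
        exact this ▸ hKmem n ω
      · intro h
        exact hKuniq n ω k h
    exact this ▸ hfm n k
  have hVmeas : ∀ n, Measurable[m] (V n) := by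
    intro n
    exact Measurable.comp (measurable_from_top (f := fun k : ℕ => (k : ℝ) / 2 ^ n)) (hKmeas n)
  have hUmeas : Measurable[m] U := by
    apply @measurable_of_tendsto_metrizable Ω ℝ m _ _ _ _ V U hVmeas
    rw [tendsto_pi_nhds]
    intro ω
    exact tendsto_atTop_ciSup (hVmono ω) (hbdd ω)
  have hconv : ∀ (k : ℕ) (n : ℕ), (k : ℝ≥0∞) * (2 : ℝ≥0∞)⁻¹ ^ n
      = ENNReal.ofReal ((k : ℝ) * (2 : ℝ)⁻¹ ^ n) := by
    intro k n
    rw [ENNReal.ofReal_mul (by positivity), ENNReal.ofReal_natCast, ENNReal.ofReal_pow (by norm_num),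
      ENNReal.ofReal_inv_of_pos (by norm_num), ENNReal.ofReal_ofNat]
  have hcum : ∀ (n k : ℕ), k < 2 ^ n →
      ℙ {ω | K n ω ≤ k} = ((k : ℝ≥0∞) + 1) * (2 : ℝ≥0∞)⁻¹ ^ n := by
    intro n k hk
    have hset : {ω | K n ω ≤ k} = ⋃ j ∈ Finset.range (k + 1), f n j := by
      ext ω
      simp only [Set.mem_setOf_eq, Set.mem_iUnion, Finset.mem_range]
      constructor
      · intro h
        exact ⟨K n ω, by omega, hKmem n ω⟩
      · rintro ⟨j, hj, hmem⟩
        rw [hKuniq n ω j hmem]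
        omega
    rw [hset, measure_biUnion_finset (fun i _ j _ hij => hfdisj n hij)
      (fun j _ => hm _ (hfm n j))]
    rw [Finset.sum_congr rfl (fun j hj => hfval n j (by
      simp only [Finset.mem_range] at hj; omega))]
    rw [Finset.sum_const, Finset.card_range, nsmul_eq_mul]
    push_cast
    ring
  have hcum' : ∀ (n k : ℕ), k < 2 ^ n →
      ℙ {ω | K n ω ≤ k} = ENNReal.ofReal (((k : ℝ) + 1) * (2 : ℝ)⁻¹ ^ n) := by
    intro n k hk
    rw [hcum n k hk]
    have h1 : ((k : ℝ≥0∞) + 1) = ((k + 1 : ℕ) : ℝ≥0∞) := by push_cast; ring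
    rw [h1, hconv (k + 1) n]
    push_cast
    ring_nf
  refine ⟨U, hUmeas, hU01, ?_⟩
  intro t ht
  obtain ⟨ht0, ht1⟩ := ht
  have hlow : ∀ n : ℕ, ENNReal.ofReal (t - (2 : ℝ)⁻¹ ^ n) ≤ ℙ {ω | U ω ≤ t} := by
    intro n
    set en : ℝ := (2 : ℝ)⁻¹ ^ n with hen
    have hen_pos : 0 < en := by positivity
    have hen2 : en * 2 ^ n = 1 := by
      rw [hen, inv_pow, inv_mul_cancel₀ (by positivity)]
    have hdiv : ∀ r : ℝ, r / 2 ^ n = r * en := by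
      intro r
      rw [hen, inv_pow, div_eq_mul_inv]
    rcases lt_or_ge t en with h | h
    · rw [ENNReal.ofReal_eq_zero.mpr (by linarith)]
      exact zero_le
    · have hk1 : 1 ≤ ⌊t * 2 ^ n⌋₊ := by
        apply Nat.le_floor
        push_cast
        calc (1:ℝ) = en * 2 ^ n := hen2.symm
          _ ≤ t * 2 ^ n := mul_le_mul_of_nonneg_right h (by positivity)
      obtain ⟨k', hk'⟩ : ∃ k', ⌊t * 2 ^ n⌋₊ = k' + 1 := ⟨⌊t * 2 ^ n⌋₊ - 1, by omega⟩
      have hkle : ((k' : ℝ) + 1) ≤ t * 2 ^ n := by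
        have h0 := Nat.floor_le (show 0 ≤ t * 2 ^ n by positivity)
        rw [hk'] at h0
        push_cast at h0
        linarith
      have hklt : k' < 2 ^ n := by
        have hp : (0:ℝ) < 2 ^ n := by positivity
        have h2 : (k' : ℝ) < ((2 ^ n : ℕ) : ℝ) := by push_cast; nlinarith
        exact_mod_cast h2
      have hlt2 : t * 2 ^ n < (k' : ℝ) + 2 := by
        have h0 := Nat.lt_floor_add_one (t * 2 ^ n)
        rw [hk'] at h0
        push_cast at h0
        linarith
      have hsub : {ω | K n ω ≤ k'} ⊆ {ω | U ω ≤ t} := by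
        intro ω hω
        simp only [Set.mem_setOf_eq] at hω ⊢
        have hVω : V n ω ≤ (k' : ℝ) * en := by
          show (K n ω : ℝ) / 2 ^ n ≤ (k' : ℝ) * en
          rw [hdiv]
          have : (K n ω : ℝ) ≤ (k' : ℝ) := by exact_mod_cast hω
          nlinarith
        calc U ω ≤ V n ω + en := hUub n ω
          _ ≤ (k' : ℝ) * en + en := by linarith
          _ ≤ t := by nlinarith
      calc ENNReal.ofReal (t - en) ≤ ENNReal.ofReal (((k' : ℝ) + 1) * en) := by
            apply ENNReal.ofReal_le_ofReal
            nlinarith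
        _ = ℙ {ω | K n ω ≤ k'} := (hcum' n k' hklt).symm
        _ ≤ ℙ {ω | U ω ≤ t} := measure_mono hsub
  have hup : ℙ {ω | U ω ≤ t} ≤ ENNReal.ofReal t := by
    rcases eq_or_lt_of_le ht1 with rfl | ht1'
    · calc ℙ {ω | U ω ≤ 1} ≤ 1 := prob_le_one
        _ = ENNReal.ofReal 1 := by simp
    · have hupn : ∀ n : ℕ, ℙ {ω | U ω ≤ t} ≤ ENNReal.ofReal (t + (2 : ℝ)⁻¹ ^ n) := by
        intro n
        set en : ℝ := (2 : ℝ)⁻¹ ^ n with hen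
        have hen_pos : 0 < en := by positivity
        have hen2 : en * 2 ^ n = 1 := by
          rw [hen, inv_pow, inv_mul_cancel₀ (by positivity)]
        set k : ℕ := ⌊t * 2 ^ n⌋₊ with hk
        have hklt : k < 2 ^ n := by
          rw [hk]
          have hp : (0:ℝ) < 2 ^ n := by positivity
          rw [Nat.floor_lt (by positivity)]
          push_cast
          nlinarith
        have hsub : {ω | U ω ≤ t} ⊆ {ω | K n ω ≤ k} := by
          intro ω hω
          simp only [Set.mem_setOf_eq] at hω ⊢
          have h1 : (K n ω : ℝ) / 2 ^ n ≤ t := (hUlb n ω).trans hω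
          rw [hk]
          apply Nat.le_floor
          rw [div_le_iff₀ (by positivity)] at h1
          exact_mod_cast h1
        calc ℙ {ω | U ω ≤ t} ≤ ℙ {ω | K n ω ≤ k} := measure_mono hsub
          _ = ENNReal.ofReal (((k : ℝ) + 1) * en) := hcum' n k hklt
          _ ≤ ENNReal.ofReal (t + en) := by
              apply ENNReal.ofReal_le_ofReal
              have h0 : (k : ℝ) ≤ t * 2 ^ n := Nat.floor_le (by positivity)
              nlinarith
      have htend : Filter.Tendsto (fun n : ℕ => ENNReal.ofReal (t + (2 : ℝ)⁻¹ ^ n))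
          Filter.atTop (nhds (ENNReal.ofReal t)) := by
        have h1 : Filter.Tendsto (fun n : ℕ => t + (2 : ℝ)⁻¹ ^ n) Filter.atTop (nhds t) := by
          have h2 := tendsto_pow_atTop_nhds_zero_of_lt_one (show (0:ℝ) ≤ 2⁻¹ by norm_num)
            (show (2:ℝ)⁻¹ < 1 by norm_num)
          simpa using (tendsto_const_nhds (x := t)).add h2
        exact (ENNReal.continuous_ofReal.tendsto t).comp h1
      exact ge_of_tendsto' htend hupn
  have htendlow : Filter.Tendsto (fun n : ℕ => ENNReal.ofReal (t - (2 : ℝ)⁻¹ ^ n))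
      Filter.atTop (nhds (ENNReal.ofReal t)) := by
    have h1 : Filter.Tendsto (fun n : ℕ => t - (2 : ℝ)⁻¹ ^ n) Filter.atTop (nhds t) := by
      have h2 := tendsto_pow_atTop_nhds_zero_of_lt_one (show (0:ℝ) ≤ 2⁻¹ by norm_num)
        (show (2:ℝ)⁻¹ < 1 by norm_num)
      simpa using (tendsto_const_nhds (x := t)).sub h2
    exact (ENNReal.continuous_ofReal.tendsto t).comp h1
  exact le_antisymm hup (le_of_tendsto' htendlow hlow)

/-- the (truncated) quantile function -/
noncomputable def qf (ℙ : Measure Ω) (X : Ω → ℝ) (C : ℝ) (u : ℝ) : ℝ :=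
  sInf {x : ℝ | -C ≤ x ∧ ENNReal.ofReal (min u 1) ≤ ℙ {ω | X ω ≤ x}}

section qf
variable (ℙ : Measure Ω) [IsProbabilityMeasure ℙ] {X : Ω → ℝ} {C : ℝ}

lemma qf_FC (hC : ∀ ω, |X ω| ≤ C) : ℙ {ω | X ω ≤ C} = 1 := by
  have : {ω | X ω ≤ C} = Set.univ :=
    Set.eq_univ_of_forall fun ω => (le_abs_self _).trans (hC ω)
  rw [this, measure_univ]

lemma qf_mem_C (hC : ∀ ω, |X ω| ≤ C) (u : ℝ) :
    C ∈ {x : ℝ | -C ≤ x ∧ ENNReal.ofReal (min u 1) ≤ ℙ {ω | X ω ≤ x}} := by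
  have hΩ : Nonempty Ω := by
    by_contra h
    have : (Set.univ : Set Ω) = ∅ := Set.univ_eq_empty_iff.mpr (not_nonempty_iff.mp h)
    have h1 := measure_univ (μ := ℙ)
    rw [this, measure_empty] at h1
    exact zero_ne_one h1
  obtain ⟨ω₀⟩ := hΩ
  have hC0 : 0 ≤ C := (abs_nonneg _).trans (hC ω₀)
  refine ⟨by linarith, ?_⟩
  rw [qf_FC ℙ hC]
  calc ENNReal.ofReal (min u 1) ≤ ENNReal.ofReal 1 :=
        ENNReal.ofReal_le_ofReal (min_le_right _ _)
    _ = 1 := by simp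

lemma qf_bddBelow (u : ℝ) :
    BddBelow {x : ℝ | -C ≤ x ∧ ENNReal.ofReal (min u 1) ≤ ℙ {ω | X ω ≤ x}} :=
  ⟨-C, fun x hx => hx.1⟩

lemma qf_le_C (hC : ∀ ω, |X ω| ≤ C) (u : ℝ) : qf ℙ X C u ≤ C :=
  csInf_le (qf_bddBelow ℙ u) (qf_mem_C ℙ hC u)

lemma qf_ge_negC (hC : ∀ ω, |X ω| ≤ C) (u : ℝ) : -C ≤ qf ℙ X C u :=
  le_csInf ⟨C, qf_mem_C ℙ hC u⟩ fun x hx => hx.1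

lemma qf_abs_le (hC : ∀ ω, |X ω| ≤ C) (u : ℝ) : |qf ℙ X C u| ≤ C :=
  abs_le.mpr ⟨qf_ge_negC ℙ hC u, qf_le_C ℙ hC u⟩

lemma qf_monotone (hC : ∀ ω, |X ω| ≤ C) : Monotone (qf ℙ X C) := by
  intro u u' huu'
  apply csInf_le_csInf (qf_bddBelow ℙ u) ⟨C, qf_mem_C ℙ hC u'⟩
  intro x hx
  exact ⟨hx.1, le_trans (ENNReal.ofReal_le_ofReal (min_le_min huu' le_rfl)) hx.2⟩

/-- comparison: if the CDF of Y dominates below (FSD), quantiles are ordered -/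
lemma qf_compare {Y : Ω → ℝ} (hCX : ∀ ω, |X ω| ≤ C) (hCY : ∀ ω, |Y ω| ≤ C)
    (hF : ∀ x : ℝ, ℙ {ω | Y ω ≤ x} ≤ ℙ {ω | X ω ≤ x}) (u : ℝ) :
    qf ℙ X C u ≤ qf ℙ Y C u := by
  apply csInf_le_csInf (qf_bddBelow ℙ u) ⟨C, qf_mem_C ℙ hCY u⟩
  intro x hx
  exact ⟨hx.1, hx.2.trans (hF x)⟩

/-- Galois connection for `u ∈ (0, 1]`. -/
lemma qf_galois (hm : m ≤ mΩ) (hXm : Measurable[m] X) (hC : ∀ ω, |X ω| ≤ C) {u : ℝ}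
    (hu0 : 0 < u) (hu1 : u ≤ 1) (x : ℝ) :
    qf ℙ X C u ≤ x ↔ ENNReal.ofReal u ≤ ℙ {ω | X ω ≤ x} := by
  have hmin : min u 1 = u := min_eq_left hu1
  constructor
  · intro h
    have hsets : ∀ n : ℕ, MeasurableSet[mΩ] {ω | X ω ≤ x + ((n : ℝ) + 1)⁻¹} := fun n =>
      (hXm.mono hm le_rfl) measurableSet_Iic
    have hanti : Antitone fun n : ℕ => {ω | X ω ≤ x + ((n : ℝ) + 1)⁻¹} := by
      intro a b hab ω hω
      simp only [Set.mem_setOf_eq] at hω ⊢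
      have h1 : ((a : ℝ)) ≤ b := Nat.cast_le.mpr hab
      have h2 : ((b : ℝ) + 1)⁻¹ ≤ ((a : ℝ) + 1)⁻¹ := by
        apply inv_anti₀ (by positivity)
        linarith
      linarith
    have hseq : ∀ n : ℕ, ENNReal.ofReal u ≤ ℙ {ω | X ω ≤ x + ((n : ℝ) + 1)⁻¹} := by
      intro n
      have hpos : (0 : ℝ) < ((n : ℝ) + 1)⁻¹ := by positivity
      have hlt : sInf {x : ℝ | -C ≤ x ∧ ENNReal.ofReal (min u 1) ≤ ℙ {ω | X ω ≤ x}}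
          < qf ℙ X C u + ((n : ℝ) + 1)⁻¹ := by
        have : qf ℙ X C u < qf ℙ X C u + ((n : ℝ) + 1)⁻¹ := by linarith
        exact this
      obtain ⟨x', hx'mem, hx'lt⟩ := (csInf_lt_iff (qf_bddBelow ℙ u) ⟨C, qf_mem_C ℙ hC u⟩).mp hlt
      have hx'2 : ENNReal.ofReal u ≤ ℙ {ω | X ω ≤ x'} := by
        rw [← hmin]
        exact hx'mem.2
      refine hx'2.trans (measure_mono ?_)
      intro ω hω
      simp only [Set.mem_setOf_eq] at hω ⊢
      linarith
    have hInter : (⋂ n : ℕ, {ω | X ω ≤ x + ((n : ℝ) + 1)⁻¹}) = {ω | X ω ≤ x} := by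
      ext ω
      simp only [Set.mem_iInter, Set.mem_setOf_eq]
      constructor
      · intro hall
        by_contra hlt
        push_neg at hlt
        have hXx : 0 < X ω - x := by linarith
        obtain ⟨n, hn⟩ := exists_nat_gt (X ω - x)⁻¹
        have h2 : ((n : ℝ) + 1)⁻¹ < X ω - x := by
          apply (inv_lt_comm₀ hXx (by positivity)).mp
          linarith
        linarith [hall n]
      · intro hle n
        have : (0 : ℝ) < ((n : ℝ) + 1)⁻¹ := by positivity
        linarith
    have htend := tendsto_measure_iInter_atTop (μ := ℙ)
      (fun n => (hsets n).nullMeasurableSet) hanti ⟨0, (measure_lt_top ℙ _).ne⟩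
    rw [hInter] at htend
    exact ge_of_tendsto' htend hseq
  · intro h
    apply csInf_le (qf_bddBelow ℙ u)
    refine ⟨?_, by rw [hmin]; exact h⟩
    by_contra hneg
    push_neg at hneg
    have hempty : {ω | X ω ≤ x} = ∅ := by
      ext ω
      simp only [Set.mem_setOf_eq, Set.mem_empty_iff_false, iff_false, not_le]
      have := (abs_le.mp (hC ω)).1
      linarith
    rw [hempty, measure_empty] at h
    rw [nonpos_iff_eq_zero, ENNReal.ofReal_eq_zero] at h
    linarith

lemma qf_law (hm : m ≤ mΩ) {U : Ω → ℝ} (hUm : Measurable[m] U)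
    (hU01 : ∀ ω, U ω ∈ Set.Icc (0 : ℝ) 1)
    (hUcdf : ∀ t ∈ Set.Icc (0 : ℝ) 1, ℙ {ω | U ω ≤ t} = ENNReal.ofReal t)
    (hXm : Measurable[m] X) (hC : ∀ ω, |X ω| ≤ C) :
    Measure.map X ℙ = Measure.map (fun ω => qf ℙ X C (U ω)) ℙ := by
  have hX'm : Measurable[m] fun ω => qf ℙ X C (U ω) :=
    ((qf_monotone ℙ hC).measurable).comp hUm
  have hXM : Measurable X := hXm.mono hm le_rfl
  have hX'M : Measurable fun ω => qf ℙ X C (U ω) := hX'm.mono hm le_rfl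
  have hU0 : ℙ {ω | U ω ≤ 0} = 0 := by
    rw [hUcdf 0 ⟨le_rfl, zero_le_one⟩]
    simp
  haveI h1 : IsProbabilityMeasure (Measure.map X ℙ) :=
    Measure.isProbabilityMeasure_map hXM.aemeasurable
  apply Measure.ext_of_Iic
  intro x
  rw [Measure.map_apply hXM measurableSet_Iic, Measure.map_apply hX'M measurableSet_Iic]
  set F : ℝ≥0∞ := ℙ {ω | X ω ≤ x} with hF
  have hFtop : F ≠ ⊤ := (measure_lt_top ℙ _).ne
  have hFle1 : F.toReal ≤ 1 := by
    have h2 : F ≤ 1 := prob_le_one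
    calc F.toReal ≤ (1 : ℝ≥0∞).toReal := ENNReal.toReal_mono ENNReal.one_ne_top h2
      _ = 1 := by simp
  have hae : ((fun ω => qf ℙ X C (U ω)) ⁻¹' Set.Iic x) =ᵐ[ℙ] {ω | U ω ≤ F.toReal} := by
    rw [ae_eq_set]
    constructor
    · apply measure_mono_null ?_ hU0
      intro ω hω
      obtain ⟨hω1, hω2⟩ := hω
      simp only [Set.mem_preimage, Set.mem_Iic] at hω1
      simp only [Set.mem_setOf_eq, not_le] at hω2
      by_contra hpos
      simp only [Set.mem_setOf_eq, not_le] at hpos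
      have hgal := (qf_galois ℙ hm hXm hC hpos (hU01 ω).2 x).mp hω1
      exact absurd ((ENNReal.ofReal_le_iff_le_toReal hFtop).mp hgal) (not_le.mpr hω2)
    · apply measure_mono_null ?_ hU0
      intro ω hω
      obtain ⟨hω1, hω2⟩ := hω
      simp only [Set.mem_setOf_eq] at hω1
      simp only [Set.mem_preimage, Set.mem_Iic, not_le] at hω2
      by_contra hpos
      simp only [Set.mem_setOf_eq, not_le] at hpos
      have hgal := (qf_galois ℙ hm hXm hC hpos (hU01 ω).2 x).mpr
        ((ENNReal.ofReal_le_iff_le_toReal hFtop).mpr hω1)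
      exact absurd hgal (not_le.mpr hω2)
  calc ℙ (X ⁻¹' Set.Iic x) = F := rfl
    _ = ENNReal.ofReal F.toReal := (ENNReal.ofReal_toReal hFtop).symm
    _ = ℙ {ω | U ω ≤ F.toReal} := (hUcdf F.toReal ⟨ENNReal.toReal_nonneg, hFle1⟩).symm
    _ = ℙ ((fun ω => qf ℙ X C (U ω)) ⁻¹' Set.Iic x) := (measure_congr hae).symm

end qf

end AuxFSD

/-- for a monotone total preorder on a 𝓖-law-invariant set of bounded random
variables, with (Ω,𝓖,ℙ) atomless, 𝓖-FSD monotonicity is equivalent to 𝓖-law invariance. -/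
theorem stmt_1 {Ω : Type*} (m : MeasurableSpace Ω) {mΩ : MeasurableSpace Ω} (hm : m ≤ mΩ)
    (ℙ : Measure Ω) [IsProbabilityMeasure ℙ]
    (hatomless : ∀ A : Set Ω, MeasurableSet[m] A → 0 < ℙ A →
      ∃ B : Set Ω, MeasurableSet[m] B ∧ B ⊆ A ∧ 0 < ℙ B ∧ ℙ B < ℙ A)
    (𝒳 : Set (Ω → ℝ)) (R : (Ω → ℝ) → (Ω → ℝ) → Prop)
    (h𝒳 : ∀ X ∈ 𝒳, Measurable X ∧ ∃ C : ℝ, ∀ ω, |X ω| ≤ C)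
    (h𝒳law : ∀ X ∈ 𝒳, ∀ Y : Ω → ℝ, Measurable[m] X → Measurable[m] Y →
      (∃ C : ℝ, ∀ ω, |Y ω| ≤ C) → Measure.map X ℙ = Measure.map Y ℙ → Y ∈ 𝒳)
    (hrefl : ∀ X ∈ 𝒳, R X X)
    (htrans : ∀ X ∈ 𝒳, ∀ Y ∈ 𝒳, ∀ Z ∈ 𝒳, R X Y → R Y Z → R X Z)
    (htotal : ∀ X ∈ 𝒳, ∀ Y ∈ 𝒳, R X Y ∨ R Y X)
    (hmono : ∀ X ∈ 𝒳, ∀ Y ∈ 𝒳, (∀ᵐ ω ∂ℙ, X ω ≤ Y ω) → R X Y) :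
    (∀ X ∈ 𝒳, ∀ Y ∈ 𝒳, Measurable[m] X → Measurable[m] Y →
        (∀ x : ℝ, ℙ {ω | Y ω ≤ x} ≤ ℙ {ω | X ω ≤ x}) → R X Y)
      ↔ (∀ X ∈ 𝒳, ∀ Y ∈ 𝒳, Measurable[m] X → Measurable[m] Y →
        Measure.map X ℙ = Measure.map Y ℙ → (R X Y ∧ R Y X)) := by
  constructor
  · intro hFSD X hX Y hY hXm hYm hmap
    have hXM : Measurable X := hXm.mono hm le_rfl
    have hYM : Measurable Y := hYm.mono hm le_rfl
    have hcdf : ∀ x : ℝ, ℙ {ω | Y ω ≤ x} = ℙ {ω | X ω ≤ x} := by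
      intro x
      have h1 : ℙ {ω | X ω ≤ x} = Measure.map X ℙ (Set.Iic x) := by
        rw [Measure.map_apply hXM measurableSet_Iic]
        rfl
      have h2 : ℙ {ω | Y ω ≤ x} = Measure.map Y ℙ (Set.Iic x) := by
        rw [Measure.map_apply hYM measurableSet_Iic]
        rfl
      rw [h1, h2, hmap]
    exact ⟨hFSD X hX Y hY hXm hYm fun x => (hcdf x).le,
      hFSD Y hY X hX hYm hXm fun x => (hcdf x).ge⟩
  · intro hlaw X hX Y hY hXm hYm hF
    obtain ⟨U, hUm, hU01, hUcdf⟩ := aux_uniform hm ℙ hatomless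
    obtain ⟨CX, hCX⟩ := (h𝒳 X hX).2
    obtain ⟨CY, hCY⟩ := (h𝒳 Y hY).2
    set C := max CX CY with hCdef
    have hCX' : ∀ ω, |X ω| ≤ C := fun ω => (hCX ω).trans (le_max_left _ _)
    have hCY' : ∀ ω, |Y ω| ≤ C := fun ω => (hCY ω).trans (le_max_right _ _)
    set X' := fun ω => qf ℙ X C (U ω) with hX'def
    set Y' := fun ω => qf ℙ Y C (U ω) with hY'def
    have hX'm : Measurable[m] X' := ((qf_monotone ℙ hCX').measurable).comp hUm
    have hY'm : Measurable[m] Y' := ((qf_monotone ℙ hCY').measurable).comp hUm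
    have hX'law : Measure.map X ℙ = Measure.map X' ℙ :=
      qf_law ℙ hm hUm hU01 hUcdf hXm hCX'
    have hY'law : Measure.map Y ℙ = Measure.map Y' ℙ :=
      qf_law ℙ hm hUm hU01 hUcdf hYm hCY'
    have hX'mem : X' ∈ 𝒳 := h𝒳law X hX X' hXm hX'm
      ⟨C, fun ω => qf_abs_le ℙ hCX' (U ω)⟩ hX'law
    have hY'mem : Y' ∈ 𝒳 := h𝒳law Y hY Y' hYm hY'm
      ⟨C, fun ω => qf_abs_le ℙ hCY' (U ω)⟩ hY'law
    have h1 := hlaw X hX X' hX'mem hXm hX'm hX'law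
    have h2 := hlaw Y hY Y' hY'mem hYm hY'm hY'law
    have h3 : R X' Y' := hmono X' hX'mem Y' hY'mem
      (Filter.Eventually.of_forall fun ω => qf_compare ℙ hCX' hCY' hF (U ω))
    exact htrans X hX X' hX'mem Y hY h1.1 (htrans X' hX'mem Y' hY'mem Y hY h3 h2.2)
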